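/- Every universally Baire set of reals has the Baire property and is Lebesgue measurable; in particular any set A ⊆ ω^ω that equals p[T] = ℝ \ p[U] for a pair of trees that are absolutely complementing for all forcings of the form Col(ω,Z) has the property of Baire. -/

import Mathlib

/-!
STATEMENT 6: Every universally Baire set of reals has the Baire property and is
Lebesgue (indeed universally) measurable.

We use the Feng–Magidor–Woodin formulation of universal Baireness: A ⊆ ω^ω is
universally Baire iff for every topological space Y and every continuous f : Y → ω^ω,
the preimage f⁻¹(A) has the property of Baire in Y.  (This is equivalent to A having
Z-absolutely complementing tree representations A = p[T] = ℝ \ p[U] for all Z.)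
-/

abbrev Rl := ℕ → ℕ

open Filter MeasureTheory Set Topology
open scoped ENNReal

namespace UBAux

/-- The cylinder of length `n` around `x`. -/
def cyl (x : Rl) (n : ℕ) : Set Rl := {y | ∀ i < n, y i = x i}

lemma self_mem_cyl (x : Rl) (n : ℕ) : x ∈ cyl x n := fun _ _ => rfl

lemma cyl_anti (x : Rl) {m n : ℕ} (h : m ≤ n) : cyl x n ⊆ cyl x m :=
  fun _ hy i hi => hy i (lt_of_lt_of_le hi h)

lemma cyl_eq_of_mem {x y : Rl} {n : ℕ} (h : y ∈ cyl x n) : cyl y n = cyl x n := by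
  ext z; constructor <;> intro hz i hi
  · exact (hz i hi).trans (h i hi)
  · exact (hz i hi).trans (h i hi).symm

lemma cyl_eq_iInter (x : Rl) (n : ℕ) :
    cyl x n = ⋂ i ∈ Finset.range n, (fun y : Rl => y i) ⁻¹' {x i} := by
  ext y; simp [cyl]

lemma isOpen_cyl (x : Rl) (n : ℕ) : IsOpen (cyl x n) := by
  rw [cyl_eq_iInter]
  exact isOpen_biInter_finset fun i _ =>
    (continuous_apply i).isOpen_preimage _ trivial

lemma measurableSet_cyl (x : Rl) (n : ℕ) : MeasurableSet (cyl x n) := by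
  rw [cyl_eq_iInter]
  exact MeasurableSet.biInter (Finset.range n).countable_toSet fun i _ =>
    (measurable_pi_apply i) (measurableSet_singleton (x i))

lemma exists_cyl_subset {O : Set Rl} (hO : IsOpen O) {x : Rl} (hx : x ∈ O) :
    ∃ n, cyl x n ⊆ O := by
  obtain ⟨I, u, hu, hsub⟩ := isOpen_pi_iff.1 hO x hx
  refine ⟨I.sup id + 1, fun y hy => hsub fun i hi => ?_⟩
  have : y i = x i := hy i (Nat.lt_succ_of_le (Finset.le_sup (f := id) hi))
  rw [this]; exact (hu i hi).2

lemma cyl_subset_cyl_of_ne_empty {x y : Rl} {n m : ℕ} (hnm : n ≤ m)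
    (h : (cyl x n ∩ cyl y m).Nonempty) : cyl y m ⊆ cyl x n := by
  obtain ⟨z, hz1, hz2⟩ := h
  intro w hw i hi
  exact (hw i (lt_of_lt_of_le hi hnm)).trans ((hz2 i (lt_of_lt_of_le hi hnm)).symm.trans (hz1 i hi))

lemma cyl_subset_le {x : Rl} {n m : ℕ} (h : cyl x n ⊆ cyl x m) : m ≤ n := by
  by_contra hc
  push_neg at hc
  have hy : Function.update x n (x n + 1) ∈ cyl x n := by
    intro i hi
    rw [Function.update_of_ne (Nat.ne_of_lt hi)]
  have := h hy n hc
  rw [Function.update_self] at this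
  omega

/-- Any cylinder that contains `cyl x n` is of the form `cyl x m` for some `m ≤ n`. -/
lemma superset_cyl {x y : Rl} {n m : ℕ} (h : cyl x n ⊆ cyl y m) :
    m ≤ n ∧ cyl y m = cyl x m := by
  have hx : x ∈ cyl y m := h (self_mem_cyl x n)
  have hym : cyl y m = cyl x m := (cyl_eq_of_mem hx).symm
  rw [hym] at h
  exact ⟨cyl_subset_le h, hym⟩

lemma countable_cylSets : {S : Set Rl | ∃ x n, S = cyl x n}.Countable := by
  have : {S : Set Rl | ∃ x n, S = cyl x n} ⊆
      Set.range (fun l : List ℕ => cyl (fun i => l.getD i 0) l.length) := by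
    rintro S ⟨x, n, rfl⟩
    refine ⟨(List.range n).map x, ?_⟩
    have hlen : ((List.range n).map x).length = n := by simp
    ext y
    simp only [cyl, mem_setOf_eq, hlen]
    constructor <;> intro h i hi
    · rw [h i hi, List.getD_eq_getElem _ _ (by simpa using hi)]
      simp
    · rw [h i hi, List.getD_eq_getElem _ _ (by simpa using hi)] at *
      simpa using h i hi
  exact (Set.countable_range _).mono this


/-- Vitali-type selection: from any family of cylinders one can select a countable pairwise
disjoint subfamily with the same union (the maximal cylinders of the family). -/
lemma vitali_selection {𝒞 : Set (Set Rl)} (h𝒞 : ∀ c ∈ 𝒞, ∃ x n, c = cyl x n) :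
    ∃ 𝒟 ⊆ 𝒞, 𝒟.Countable ∧ 𝒟.Pairwise Disjoint ∧ ⋃₀ 𝒞 = ⋃₀ 𝒟 := by
  set 𝒟 := {c ∈ 𝒞 | ∀ d ∈ 𝒞, c ⊆ d → d = c} with h𝒟
  have h𝒟sub : 𝒟 ⊆ 𝒞 := fun c hc => hc.1
  refine ⟨𝒟, h𝒟sub, ?_, ?_, ?_⟩
  · exact countable_cylSets.mono (fun c hc => h𝒞 c (h𝒟sub hc))
  · -- pairwise disjoint
    intro c hc d hd hne
    by_contra hdisj
    rw [Set.not_disjoint_iff_nonempty_inter] at hdisj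
    obtain ⟨x, n, rfl⟩ := h𝒞 c (h𝒟sub hc)
    obtain ⟨y, m, rfl⟩ := h𝒞 d (h𝒟sub hd)
    rcases le_total n m with hnm | hmn
    · exact hne ((hd.2 _ (h𝒟sub hc) (cyl_subset_cyl_of_ne_empty hnm hdisj)).symm).symm
    · exact hne (hc.2 _ (h𝒟sub hd)
        (cyl_subset_cyl_of_ne_empty hmn (by rwa [Set.inter_comm] at hdisj))).symm
  · -- same union
    refine le_antisymm ?_ (sUnion_subset_sUnion h𝒟sub)
    rintro z ⟨c, hc, hz⟩
    obtain ⟨x, n, rfl⟩ := h𝒞 c hc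
    -- find the maximal cylinder around x containing cyl x n
    have hP : cyl x n ∈ 𝒞 := hc
    classical
    have hex : ∃ k, cyl x k ∈ 𝒞 := ⟨n, hP⟩
    let k0 := Nat.find hex
    have hk0 : cyl x k0 ∈ 𝒞 := Nat.find_spec hex
    have hk0n : k0 ≤ n := Nat.find_min' hex hP
    have hsub : cyl x n ⊆ cyl x k0 := fun y hy i hi => hy i (lt_of_lt_of_le hi hk0n)
    refine ⟨cyl x k0, ⟨hk0, ?_⟩, hsub hz⟩
    intro d hd hsubd
    obtain ⟨y, m, rfl⟩ := h𝒞 d hd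
    obtain ⟨hmk, heq⟩ := superset_cyl hsubd
    have : cyl x m ∈ 𝒞 := heq ▸ hd
    have : k0 ≤ m := Nat.find_min' hex this
    have hmk0 : m = k0 := le_antisymm hmk this
    rw [heq, hmk0]


variable (μ : MeasureTheory.Measure Rl) [IsFiniteMeasure μ]

/-- Covering lemma: the set of points of `s` around which `s` has arbitrarily small
relative-measure-`≤ q` cylinders is null. -/
lemma measure_bad_eq_zero (s : Set Rl) {q : ℝ≥0∞} (hq : q < 1) :
    μ {x | x ∈ s ∧ ∀ m : ℕ, ∃ n, m ≤ n ∧ μ (s ∩ cyl x n) ≤ q * μ (cyl x n)} = 0 := by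
  set t := {x | x ∈ s ∧ ∀ m : ℕ, ∃ n, m ≤ n ∧ μ (s ∩ cyl x n) ≤ q * μ (cyl x n)} with ht
  have key : ∀ W : Set Rl, IsOpen W → t ⊆ W → μ t ≤ q * μ W := by
    intro W hW htW
    set 𝒞 := {c : Set Rl | (∃ x n, c = cyl x n) ∧ c ⊆ W ∧ μ (s ∩ c) ≤ q * μ c} with h𝒞def
    obtain ⟨𝒟, h𝒟𝒞, hcnt, hdisj, hU⟩ := vitali_selection (𝒞 := 𝒞) (fun c hc => hc.1)
    have ht𝒞 : t ⊆ ⋃₀ 𝒞 := by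
      intro x hx
      obtain ⟨m0, hm0⟩ := exists_cyl_subset hW (htW hx)
      obtain ⟨n, hn, hle⟩ := hx.2 m0
      exact ⟨cyl x n, ⟨⟨x, n, rfl⟩, (cyl_anti x hn).trans hm0, hle⟩, self_mem_cyl x n⟩
    haveI : Countable 𝒟 := hcnt.to_subtype
    have hsub : t ⊆ ⋃ c : 𝒟, (s ∩ (c : Set Rl)) := by
      intro x hx
      have hx2 : x ∈ ⋃₀ 𝒟 := by rw [← hU]; exact ht𝒞 hx
      obtain ⟨c, hc, hxc⟩ := hx2
      exact Set.mem_iUnion.2 ⟨⟨c, hc⟩, ⟨hx.1, hxc⟩⟩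
    calc μ t ≤ μ (⋃ c : 𝒟, (s ∩ (c : Set Rl))) := measure_mono hsub
      _ ≤ ∑' c : 𝒟, μ (s ∩ (c : Set Rl)) := measure_iUnion_le _
      _ ≤ ∑' c : 𝒟, q * μ (c : Set Rl) :=
          ENNReal.tsum_le_tsum (fun c => (h𝒟𝒞 c.2).2.2)
      _ = q * ∑' c : 𝒟, μ (c : Set Rl) := ENNReal.tsum_mul_left
      _ = q * μ (⋃₀ 𝒟) := by
          rw [measure_sUnion hcnt hdisj (fun c hc => by
            obtain ⟨x, n, rfl⟩ := (h𝒟𝒞 hc).1; exact measurableSet_cyl x n)]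
      _ ≤ q * μ W := by
          refine mul_le_mul' le_rfl (measure_mono (sUnion_subset fun c hc => (h𝒟𝒞 hc).2.1))
  -- conclude μ t = 0
  by_contra h0
  have hfin : μ t ≠ ∞ := measure_ne_top μ t
  have hq0 : q ≠ 0 := by
    intro hq0
    apply h0
    have := key univ isOpen_univ (subset_univ t)
    simpa [hq0] using this
  obtain ⟨q', hqq', hq'1⟩ := exists_between hq
  set a := μ t with ha
  have ha0 : a ≠ 0 := h0
  set r := a * (q' / q) with hr
  have hqtop : q ≠ ∞ := (hq.trans ENNReal.one_lt_top).ne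
  have hq'top : q' ≠ ∞ := (hq'1.trans ENNReal.one_lt_top).ne
  have hdivgt : 1 < q' / q := by
    rw [ENNReal.lt_div_iff_mul_lt (Or.inl hq0) (Or.inl hqtop), one_mul]
    exact hqq'
  have hra : a < r := by
    calc a = a * 1 := (mul_one a).symm
    _ < a * (q' / q) := by
        exact ENNReal.mul_lt_mul_right ha0 hfin hdivgt
  obtain ⟨W, htW, hWopen, hWr⟩ := Set.exists_isOpen_lt_of_lt t r hra
  have h1 : μ t ≤ q * μ W := key W hWopen htW
  have h2 : q * μ W < q * r := by
    exact ENNReal.mul_lt_mul_right hq0 hqtop hWr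
  have h3 : q * r = a * q' := by
    rw [hr, ← mul_assoc, mul_comm q a, mul_assoc, ENNReal.mul_div_cancel hq0 hqtop]
  have h4 : a * q' < a := by
    calc a * q' < a * 1 := ENNReal.mul_lt_mul_right ha0 hfin hq'1
    _ = a := mul_one a
  exact absurd ((h1.trans_lt h2).trans_le (h3 ▸ h4.le)) (lt_irrefl _)

/-- A sequence of ratios increasing to `1`. -/
noncomputable def qseq (j : ℕ) : ℝ≥0∞ := 1 - ((j : ℝ≥0∞) + 1)⁻¹

lemma qseq_lt_one (j : ℕ) : qseq j < 1 :=
  ENNReal.sub_lt_self ENNReal.one_ne_top one_ne_zero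
    (ENNReal.inv_ne_zero.2 (by simp [ENNReal.add_eq_top]))

lemma qseq_one_pos : 0 < qseq 1 := by
  rw [qseq, tsub_pos_iff_lt]
  exact ENNReal.inv_lt_one.2 (by norm_num)

lemma exists_qseq (ε : ℝ≥0∞) (hε : 0 < ε) : ∃ j, 1 ≤ qseq j + ε := by
  obtain ⟨n, hn⟩ := ENNReal.exists_inv_nat_lt hε.ne'
  refine ⟨n, ?_⟩
  have h1 : ((n : ℝ≥0∞) + 1)⁻¹ ≤ ε := by
    refine le_trans (ENNReal.inv_le_inv.2 ?_) hn.le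
    exact le_add_right le_rfl
  have h2 : ((n : ℝ≥0∞) + 1)⁻¹ ≤ 1 := by
    refine ENNReal.inv_le_one.2 ?_
    exact le_add_left le_rfl
  calc (1 : ℝ≥0∞) = 1 - ((n : ℝ≥0∞) + 1)⁻¹ + ((n : ℝ≥0∞) + 1)⁻¹ :=
        (tsub_add_cancel_of_le h2).symm
    _ ≤ qseq n + ε := add_le_add le_rfl h1

/-- The "bad set" of a set `C`: points around which `C` has arbitrarily small cylinders
of relative measure bounded away from one. -/
def Bad (C : Set Rl) : Set Rl :=
  {x | ∃ j : ℕ, ∀ m : ℕ, ∃ n, m ≤ n ∧ μ (C ∩ cyl x n) ≤ qseq j * μ (cyl x n)}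

lemma measure_inter_bad (C : Set Rl) : μ (C ∩ Bad μ C) = 0 := by
  have : C ∩ Bad μ C = ⋃ j : ℕ,
      {x | x ∈ C ∧ ∀ m : ℕ, ∃ n, m ≤ n ∧ μ (C ∩ cyl x n) ≤ qseq j * μ (cyl x n)} := by
    ext x
    simp only [Bad, mem_inter_iff, mem_setOf_eq, mem_iUnion]
    tauto
  rw [this]
  exact measure_iUnion_null fun j => measure_bad_eq_zero μ C (qseq_lt_one j)

lemma measurable_cyl_fn (C : Set Rl) (n : ℕ) :
    Measurable (fun x : Rl => μ (C ∩ cyl x n)) := by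
  have hfac : ∀ x : Rl, cyl x n = {y : Rl | ∀ i : Fin n, y i = x i} := by
    intro x; ext y
    constructor
    · intro h i; exact h i i.isLt
    · intro h i hi; exact h ⟨i, hi⟩
  have : (fun x : Rl => μ (C ∩ cyl x n)) =
      (fun v : Fin n → ℕ => μ (C ∩ {y : Rl | ∀ i : Fin n, y i = v i})) ∘
        (fun x (i : Fin n) => x i) := by
    funext x; simp only [Function.comp_apply, hfac]
  rw [this]
  exact (measurable_of_countable _).comp
    (measurable_pi_lambda _ fun i => measurable_pi_apply _)

lemma measurableSet_bad (C : Set Rl) : MeasurableSet (Bad μ C) := by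
  have : Bad μ C = ⋃ j : ℕ, ⋂ m : ℕ, ⋃ n : ℕ,
      {x | m ≤ n ∧ μ (C ∩ cyl x n) ≤ qseq j * μ (cyl x n)} := by
    ext x; simp only [Bad, mem_setOf_eq, mem_iUnion, mem_iInter]
  rw [this]
  refine MeasurableSet.iUnion fun j => MeasurableSet.iInter fun m =>
    MeasurableSet.iUnion fun n => ?_
  by_cases hmn : m ≤ n
  · have : {x : Rl | m ≤ n ∧ μ (C ∩ cyl x n) ≤ qseq j * μ (cyl x n)} =
        {x : Rl | μ (C ∩ cyl x n) ≤ qseq j * μ (cyl x n)} := by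
      ext x; simp [hmn]
    rw [this]
    have h2 : Measurable (fun x : Rl => qseq j * μ (cyl x n)) := by
      have := (measurable_cyl_fn μ univ n).const_mul (qseq j)
      simpa [Set.univ_inter] using this
    exact measurableSet_le (measurable_cyl_fn μ C n) h2
  · have : {x : Rl | m ≤ n ∧ μ (C ∩ cyl x n) ≤ qseq j * μ (cyl x n)} = ∅ := by
      ext x; simp [hmn]
    rw [this]; exact MeasurableSet.empty

/-- `O` is open in the `μ`-density topology. -/
def DOpen (O : Set Rl) : Prop :=
  ∀ x ∈ O, ∀ ε : ℝ≥0∞, 0 < ε → ∀ᶠ n in atTop, μ (cyl x n \ O) ≤ ε * μ (cyl x n)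

/-- The `μ`-density topology on `ω^ω`. -/
def dTop : TopologicalSpace Rl where
  IsOpen := DOpen μ
  isOpen_univ := fun x _ ε _ => by
    refine Eventually.of_forall fun n => ?_
    simp
  isOpen_inter := by
    intro O₁ O₂ h₁ h₂ x hx ε hε
    have hε2 : 0 < ε / 2 := by
      simp only [ENNReal.div_pos_iff]
      exact ⟨hε.ne', ENNReal.ofNat_ne_top⟩
    filter_upwards [h₁ x hx.1 (ε / 2) hε2, h₂ x hx.2 (ε / 2) hε2] with n hn1 hn2
    calc μ (cyl x n \ (O₁ ∩ O₂)) ≤ μ ((cyl x n \ O₁) ∪ (cyl x n \ O₂)) := by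
          refine measure_mono ?_
          intro y hy
          rcases Classical.em (y ∈ O₁) with h | h
          · exact Or.inr ⟨hy.1, fun hc => hy.2 ⟨h, hc⟩⟩
          · exact Or.inl ⟨hy.1, h⟩
      _ ≤ μ (cyl x n \ O₁) + μ (cyl x n \ O₂) := measure_union_le _ _
      _ ≤ ε / 2 * μ (cyl x n) + ε / 2 * μ (cyl x n) := add_le_add hn1 hn2
      _ = ε * μ (cyl x n) := by rw [← add_mul, ENNReal.add_halves]
  isOpen_sUnion := by
    intro S hS x hx ε hε
    obtain ⟨O, hO, hxO⟩ := hx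
    filter_upwards [hS O hO x hxO ε hε] with n hn
    exact le_trans (measure_mono (diff_subset_diff_right (subset_sUnion_of_mem hO))) hn

lemma dTop_isOpen_iff (O : Set Rl) : (dTop μ).IsOpen O ↔ DOpen μ O := Iff.rfl

/-- Every open set of the product topology is `μ`-density open. -/
lemma dOpen_of_isOpen {O : Set Rl} (hO : IsOpen O) : DOpen μ O := by
  intro x hx ε hε
  obtain ⟨m, hm⟩ := exists_cyl_subset hO hx
  filter_upwards [eventually_ge_atTop m] with n hn
  have : cyl x n \ O = ∅ := by
    rw [diff_eq_empty]
    exact (cyl_anti x hn).trans hm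
  simp [this]

/-- Key lemma: a `μ`-density open set is sandwiched. -/
lemma exists_superset_of_dOpen {O : Set Rl} (hO : DOpen μ O) :
    ∃ F : Set Rl, MeasurableSet F ∧ O ⊆ F ∧ μ (F \ O) = 0 := by
  set H := toMeasurable μ Oᶜ with hH
  refine ⟨Bad μ H, measurableSet_bad μ H, ?_, ?_⟩
  · -- O ⊆ Bad μ H
    intro x hx
    refine ⟨1, fun m => ?_⟩
    obtain ⟨m0, hm0⟩ := (hO x hx (qseq 1) qseq_one_pos).exists_forall_of_atTop
    refine ⟨max m m0, le_max_left _ _, ?_⟩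
    have h1 : μ (H ∩ cyl x (max m m0)) = μ (Oᶜ ∩ cyl x (max m m0)) :=
      MeasureTheory.Measure.measure_toMeasurable_inter (measurableSet_cyl x _) (measure_ne_top μ _)
    rw [h1]
    have h2 : Oᶜ ∩ cyl x (max m m0) = cyl x (max m m0) \ O := by
      ext y; simp [mem_diff, And.comm]
    rw [h2]
    exact hm0 _ (le_max_right _ _)
  · -- μ (Bad μ H \ O) = 0
    have hsub : Bad μ H \ O ⊆ H ∩ Bad μ H := by
      intro y hy
      exact ⟨subset_toMeasurable μ Oᶜ hy.2, hy.1⟩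
    exact measure_mono_null hsub (measure_inter_bad μ H)

lemma nullMeasurableSet_of_dOpen {O : Set Rl} (hO : DOpen μ O) :
    NullMeasurableSet O μ := by
  obtain ⟨F, hFm, hOF, hF0⟩ := exists_superset_of_dOpen μ hO
  refine NullMeasurableSet.congr hFm.nullMeasurableSet ?_
  rw [MeasureTheory.ae_eq_set]
  constructor
  · exact hF0
  · have : O \ F = ∅ := by rw [diff_eq_empty]; exact hOF
    simp [this]

/-- A dense `μ`-density open set is co-null. -/
lemma measure_compl_of_dense_dOpen {V : Set Rl} (hV : DOpen μ V)
    (hd : ∀ D : Set Rl, DOpen μ D → D.Nonempty → (D ∩ V).Nonempty) :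
    μ Vᶜ = 0 := by
  obtain ⟨F, hFm, hVF, hF0⟩ := exists_superset_of_dOpen μ hV
  set C := Vᶜ with hC
  set Ct := Fᶜ with hCt
  have hCtm : MeasurableSet Ct := hFm.compl
  have hCtC : Ct ⊆ C := compl_subset_compl.2 hVF
  have hCCt : μ (C \ Ct) = 0 := by
    have : C \ Ct = F \ V := by
      ext y; simp [hC, hCt, mem_diff, And.comm]
    rw [this]; exact hF0
  set D := C ∩ (Bad μ Ct)ᶜ with hD
  have hCD : μ (C \ D) = 0 := by
    have hsub : C \ D ⊆ (Ct ∩ Bad μ Ct) ∪ (C \ Ct) := by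
      intro y hy
      have hyBad : y ∈ Bad μ Ct := by
        by_contra hc
        exact hy.2 ⟨hy.1, hc⟩
      rcases Classical.em (y ∈ Ct) with h | h
      · exact Or.inl ⟨h, hyBad⟩
      · exact Or.inr ⟨hy.1, h⟩
    exact measure_mono_null hsub
      (measure_union_null (measure_inter_bad μ Ct) hCCt)
  have hDopen : DOpen μ D := by
    intro x hx ε hε
    obtain ⟨j, hj⟩ := exists_qseq ε hε
    have hxgood : x ∉ Bad μ Ct := hx.2
    simp only [Bad, mem_setOf_eq] at hxgood
    push_neg at hxgood
    obtain ⟨m, hm⟩ := hxgood j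
    filter_upwards [eventually_ge_atTop m] with n hn
    have hstrict : qseq j * μ (cyl x n) < μ (Ct ∩ cyl x n) := hm n hn
    -- μ (cyl x n \ D) ≤ μ (cyl x n \ Ct) + 0
    have hstep1 : μ (cyl x n \ D) ≤ μ (cyl x n \ Ct) := by
      have hsub : cyl x n \ D ⊆ (cyl x n \ Ct) ∪ (Ct ∩ Bad μ Ct) := by
        intro y hy
        rcases Classical.em (y ∈ Ct) with h | h
        · refine Or.inr ⟨h, ?_⟩
          by_contra hc
          exact hy.2 ⟨hCtC h, hc⟩
        · exact Or.inl ⟨hy.1, h⟩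
      calc μ (cyl x n \ D) ≤ μ ((cyl x n \ Ct) ∪ (Ct ∩ Bad μ Ct)) := measure_mono hsub
        _ ≤ μ (cyl x n \ Ct) + μ (Ct ∩ Bad μ Ct) := measure_union_le _ _
        _ = μ (cyl x n \ Ct) := by rw [measure_inter_bad μ Ct, add_zero]
    refine hstep1.trans ?_
    -- μ (cyl x n \ Ct) ≤ ε * μ (cyl x n)
    have hadd : μ (cyl x n ∩ Ct) + μ (cyl x n \ Ct) = μ (cyl x n) :=
      measure_inter_add_diff _ hCtm
    have hkey : qseq j * μ (cyl x n) + μ (cyl x n \ Ct) ≤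
        qseq j * μ (cyl x n) + ε * μ (cyl x n) := by
      calc qseq j * μ (cyl x n) + μ (cyl x n \ Ct)
          ≤ μ (cyl x n ∩ Ct) + μ (cyl x n \ Ct) := by
            refine add_le_add ?_ le_rfl
            rw [Set.inter_comm]
            exact hstrict.le
        _ = μ (cyl x n) := hadd
        _ = 1 * μ (cyl x n) := (one_mul _).symm
        _ ≤ (qseq j + ε) * μ (cyl x n) := mul_le_mul' hj le_rfl
        _ = qseq j * μ (cyl x n) + ε * μ (cyl x n) := add_mul _ _ _
    exact (ENNReal.add_le_add_iff_left
      (ENNReal.mul_ne_top (qseq_lt_one j).ne_top (measure_ne_top μ _))).1 hkey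
  -- D is disjoint from V but V is dense, so D = ∅ and hence μ C = 0
  have hDempty : D = ∅ := by
    by_contra hne
    obtain ⟨y, hy1, hy2⟩ := hd D hDopen (nonempty_iff_ne_empty.2 hne)
    exact hy1.1 hy2
  have : μ C = μ (C \ D) := by rw [hDempty, diff_empty]
  rw [hC] at this ⊢
  rw [this]
  exact hCD

/-- Meager sets of the `μ`-density topology are `μ`-null. -/
lemma measure_compl_residual {M : Set Rl} (h : M ∈ @residual Rl (dTop μ)) :
    μ Mᶜ = 0 := by
  obtain ⟨S, hSopen, hSdense, hScnt, hSsub⟩ := (@mem_residual_iff Rl (dTop μ) M).1 h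
  have hnull : ∀ V ∈ S, μ Vᶜ = 0 := by
    intro V hV
    refine measure_compl_of_dense_dOpen μ ((dTop_isOpen_iff μ V).1 (hSopen V hV)) ?_
    intro D hD hDne
    have hdense := (@dense_iff_inter_open Rl (dTop μ) V).1 (hSdense V hV)
    exact hdense D ((dTop_isOpen_iff μ D).2 hD) hDne
  have hsub : Mᶜ ⊆ ⋃ V ∈ S, Vᶜ := by
    intro x hx
    by_contra hc
    simp only [mem_iUnion, mem_compl_iff, not_exists, not_not] at hc
    exact hx (hSsub (fun V hV => hc V hV))
  refine measure_mono_null hsub ?_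
  exact (measure_biUnion_null_iff hScnt).2 hnull

/-- Baire measurable (for the `μ`-density topology) implies `μ`-null-measurable. -/
lemma nullMeasurable_of_baireMeasurable {A : Set Rl}
    (h : @BaireMeasurableSet Rl (dTop μ) A) : NullMeasurableSet A μ := by
  obtain ⟨u, huo, hequ⟩ := @BaireMeasurableSet.residualEq_isOpen Rl (dTop μ) A h
  have hE : {x | x ∈ A ↔ x ∈ u} ∈ @residual Rl (dTop μ) := by
    have := (Filter.eventuallyEq_set.1 hequ)
    exact this
  have hnull : μ {x | x ∈ A ↔ x ∈ u}ᶜ = 0 := measure_compl_residual μ hE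
  have hAu : A =ᵐ[μ] u := by
    rw [Filter.eventuallyEq_set]
    rw [MeasureTheory.ae_iff]
    refine measure_mono_null ?_ hnull
    intro x hx
    simpa using hx
  exact (nullMeasurableSet_of_dOpen μ ((dTop_isOpen_iff μ u).1 huo)).congr hAu.symm

end UBAux

/-- Feng–Magidor–Woodin: `A` is universally Baire if every continuous preimage of
`A` (in any topological space) has the property of Baire. -/
def UniversallyBaire (A : Set Rl) : Prop :=
  ∀ (Y : Type) (_ : TopologicalSpace Y) (f : Y → Rl),
    Continuous f → BaireMeasurableSet (f ⁻¹' A)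

/-- Universally Baire sets of reals have the property of Baire (in ω^ω) and are
Lebesgue measurable: they are null-measurable with respect to every (finite Borel)
measure on ω^ω. -/
theorem universallyBaire_baireProperty_and_measurable
    (A : Set Rl) (hA : UniversallyBaire A) :
    BaireMeasurableSet A ∧
      ∀ μ : MeasureTheory.Measure Rl, MeasureTheory.IsFiniteMeasure μ →
        MeasureTheory.NullMeasurableSet A μ := by
  constructor
  · have := hA Rl inferInstance id continuous_id
    simpa using this
  · intro μ hμ
    haveI := hμ
    have hle : UBAux.dTop μ ≤ (inferInstance : TopologicalSpace Rl) := by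
      rw [TopologicalSpace.le_def]
      intro O hO
      exact (UBAux.dTop_isOpen_iff μ O).2 (UBAux.dOpen_of_isOpen μ hO)
    have hcont : @Continuous Rl Rl (UBAux.dTop μ) _ id := by
      rw [@continuous_id_iff_le Rl (UBAux.dTop μ) _]
      exact hle
    have hbm := hA Rl (UBAux.dTop μ) id hcont
    rw [Set.preimage_id] at hbm
    exact UBAux.nullMeasurable_of_baireMeasurable μ hbm
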